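/- Bound on the norm of the inverse covariance of the uniform G-optimal design: Let Z ⊂ ℝ^{D} be a finite set of K vectors spanning ℝ^D, and let λ⋆ be a minimizer of λ ↦ max_{z'∈Z} z'^T Σ(λ)^{-1} z' over the simplex (with Σ(λ) = Σ_z λ_z z z^T). Then ‖Σ(λ⋆)^{-1}‖ ≤ D / ν_min, where ν_min is the smallest eigenvalue of (1/K) Σ_{z∈Z} z z^T. -/

import Mathlib

open Matrix
open scoped Classical
open scoped Matrix.Norms.L2Operator
open scoped MatrixOrder

/-- The G-optimal design objective over a finite set of vectors:
`h(λ) = max_{z'∈Z} z'ᵀ (Σ_{z∈Z} λ_z z zᵀ)⁻¹ z'` when the covariance matrix is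
invertible, and `+∞` otherwise. -/
noncomputable def gObj {D : ℕ} (Z : Finset (Fin D → ℝ)) (hZ : Z.Nonempty)
    (lam : (Fin D → ℝ) → ℝ) : EReal :=
  if IsUnit (∑ z ∈ Z, lam z • vecMulVec z z) then
    ((Z.sup' hZ fun z' => z' ⬝ᵥ (∑ z ∈ Z, lam z • vecMulVec z z)⁻¹.mulVec z' : ℝ) : EReal)
  else ⊤

section Aux

variable {D : ℕ} {ι : Type*}

lemma aux_sum_mulVec (s : Finset ι) (A : ι → Matrix (Fin D) (Fin D) ℝ) (x : Fin D → ℝ) :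
    (∑ i ∈ s, A i) *ᵥ x = ∑ i ∈ s, A i *ᵥ x := by
  ext j
  simp only [mulVec, dotProduct, Matrix.sum_apply, Finset.sum_apply, Finset.sum_mul]
  rw [Finset.sum_comm]

lemma aux_dotProduct_sum (u : Fin D → ℝ) (s : Finset ι) (v : ι → (Fin D → ℝ)) :
    u ⬝ᵥ (∑ i ∈ s, v i) = ∑ i ∈ s, u ⬝ᵥ v i := by
  simp [dotProduct, Finset.mul_sum, Finset.sum_comm (s := s)]

lemma aux_sum_dotProduct (u : Fin D → ℝ) (s : Finset ι) (v : ι → (Fin D → ℝ)) :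
    (∑ i ∈ s, v i) ⬝ᵥ u = ∑ i ∈ s, v i ⬝ᵥ u := by
  rw [dotProduct_comm, aux_dotProduct_sum]
  exact Finset.sum_congr rfl fun i _ => dotProduct_comm u (v i)

lemma aux_vecMulVec_mulVec (z x : Fin D → ℝ) : vecMulVec z z *ᵥ x = (z ⬝ᵥ x) • z := by
  ext i
  simp [vecMulVec_apply, mulVec, dotProduct, Finset.mul_sum, mul_comm, mul_left_comm]

lemma aux_quadForm (s : Finset ι) (w : ι → ℝ) (z : ι → Fin D → ℝ) (x : Fin D → ℝ) :
    x ⬝ᵥ ((∑ i ∈ s, w i • vecMulVec (z i) (z i)) *ᵥ x) = ∑ i ∈ s, w i * (z i ⬝ᵥ x) ^ 2 := by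
  rw [aux_sum_mulVec, aux_dotProduct_sum]
  refine Finset.sum_congr rfl fun i _ => ?_
  rw [smul_mulVec, aux_vecMulVec_mulVec, dotProduct_smul, dotProduct_smul]
  simp only [smul_eq_mul, dotProduct_comm x (z i), sq]

lemma aux_isHermitian (s : Finset ι) (w : ι → ℝ) (z : ι → Fin D → ℝ) :
    (∑ i ∈ s, w i • vecMulVec (z i) (z i)).IsHermitian := by
  unfold Matrix.IsHermitian
  ext j k
  simp [conjTranspose_apply, Matrix.sum_apply, vecMulVec_apply, mul_comm]

lemma aux_posSemidef (s : Finset ι) (w : ι → ℝ) (hw : ∀ i ∈ s, 0 ≤ w i) (z : ι → Fin D → ℝ) :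
    (∑ i ∈ s, w i • vecMulVec (z i) (z i)).PosSemidef := by
  refine .of_dotProduct_mulVec_nonneg (aux_isHermitian s w z) fun x => ?_
  rw [show star x = x from funext fun _ => rfl, aux_quadForm]
  exact Finset.sum_nonneg fun i hi => mul_nonneg (hw i hi) (sq_nonneg _)

lemma aux_posDef (Z : Finset (Fin D → ℝ))
    (hspan : Submodule.span ℝ (Z : Set (Fin D → ℝ)) = ⊤) :
    (∑ z ∈ Z, vecMulVec z z).PosDef := by
  have h1 : (∑ z ∈ Z, vecMulVec z z) = ∑ z ∈ Z, (1 : ℝ) • vecMulVec z z := by simp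
  refine .of_dotProduct_mulVec_pos (by rw [h1]; exact aux_isHermitian _ _ _) fun x hx => ?_
  rw [show star x = x from funext fun _ => rfl, h1, aux_quadForm]
  have hex : ∃ z ∈ Z, 0 < (1 : ℝ) * (z ⬝ᵥ x) ^ 2 := by
    by_contra hcon
    push_neg at hcon
    have hz0 : ∀ z ∈ Z, z ⬝ᵥ x = 0 := by
      intro z hz
      have := hcon z hz
      have h2 : (z ⬝ᵥ x) ^ 2 ≤ 0 := by linarith
      nlinarith [sq_nonneg (z ⬝ᵥ x)]
    -- x is orthogonal to everything, hence zero
    let f : (Fin D → ℝ) →ₗ[ℝ] ℝ :=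
      { toFun := fun v => v ⬝ᵥ x
        map_add' := fun a b => add_dotProduct a b x
        map_smul' := fun c a => smul_dotProduct c a x }
    have hker : Submodule.span ℝ (Z : Set (Fin D → ℝ)) ≤ LinearMap.ker f := by
      rw [Submodule.span_le]
      intro v hv
      exact LinearMap.mem_ker.mpr (hz0 v hv)
    have hxk : x ∈ LinearMap.ker f := hker (by rw [hspan]; trivial)
    have : x ⬝ᵥ x = 0 := hxk
    exact hx (dotProduct_self_eq_zero.mp this)
  obtain ⟨z, hz, hzpos⟩ := hex
  exact Finset.sum_pos' (fun i _ => mul_nonneg zero_le_one (sq_nonneg _)) ⟨z, hz, hzpos⟩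

lemma aux_rayleigh {V : Matrix (Fin D) (Fin D) ℝ} (hV : V.IsHermitian) {nu : ℝ}
    (h : ∀ mu ∈ spectrum ℝ V, nu ≤ mu) (x : Fin D → ℝ) :
    nu * (x ⬝ᵥ x) ≤ x ⬝ᵥ (V *ᵥ x) := by
  classical
  set B : Matrix (Fin D) (Fin D) ℝ := V - algebraMap ℝ _ nu with hBdef
  have hBh : B.IsHermitian := by
    have h1 : ((nu : ℝ) • (1 : Matrix (Fin D) (Fin D) ℝ)).IsHermitian := by
      unfold Matrix.IsHermitian
      rw [conjTranspose_smul, conjTranspose_one]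
      simp
    rw [hBdef, Algebra.algebraMap_eq_smul_one]
    exact hV.sub h1
  have hpsd : B.PosSemidef := by
    refine hBh.posSemidef_iff_eigenvalues_nonneg.mpr fun i => ?_
    have hmem := hBh.eigenvalues_mem_spectrum_real i
    rw [← spectrum.sub_singleton_eq] at hmem
    obtain ⟨mu, hmu, r, hr, hE⟩ := Set.mem_sub.mp hmem
    rw [Set.mem_singleton_iff] at hr
    subst hr
    rw [← hE]
    have := h mu hmu
    linarith [show (0 : Fin D → ℝ) i = 0 from rfl]
  have h2 := hpsd.dotProduct_mulVec_nonneg x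
  rw [show star x = x from funext fun _ => rfl] at h2
  have hBx : B *ᵥ x = V *ᵥ x - nu • x := by
    rw [hBdef, sub_mulVec, Algebra.algebraMap_eq_smul_one, smul_mulVec, one_mulVec]
  rw [hBx, dotProduct_sub, dotProduct_smul] at h2
  simp only [smul_eq_mul] at h2
  linarith

lemma aux_sqrt_dot {N : Matrix (Fin D) (Fin D) ℝ} (hN : N.PosSemidef) (a b : Fin D → ℝ) :
    (CFC.sqrt N *ᵥ a) ⬝ᵥ (CFC.sqrt N *ᵥ b) = (N *ᵥ a) ⬝ᵥ b := by
  set C := CFC.sqrt N with hC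
  have hCh : Cᵀ = C := by
    have := (CFC.sqrt_nonneg N).posSemidef.1
    rwa [Matrix.IsHermitian, conjTranspose_eq_transpose_of_trivial] at this
  rw [dotProduct_mulVec]
  have h1 : (C *ᵥ a) ᵥ* C = N *ᵥ a := by
    conv_lhs => rw [← hCh, Matrix.vecMul_transpose, Matrix.mulVec_mulVec, hCh,
      CFC.sqrt_mul_sqrt_self N hN.nonneg]
  rw [h1]


lemma aux_euclid_norm_sq (y : Fin D → ℝ) :
    ‖(WithLp.equiv 2 (Fin D → ℝ)).symm y‖ = Real.sqrt (y ⬝ᵥ y) := by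
  rw [EuclideanSpace.norm_eq]
  congr 1
  simp [dotProduct, sq, Real.norm_eq_abs, abs_mul_abs_self]

lemma aux_norm_le {M : Matrix (Fin D) (Fin D) ℝ} (hM : M.PosSemidef) {c : ℝ} (hc : 0 ≤ c)
    (h : ∀ x : Fin D → ℝ, x ⬝ᵥ (M *ᵥ x) ≤ c * (x ⬝ᵥ x)) : ‖M‖ ≤ c := by
  classical
  set C := CFC.sqrt M with hCdef
  have hCh : Cᴴ = C := (CFC.sqrt_nonneg M).posSemidef.1
  have hCC : C * C = M := CFC.sqrt_mul_sqrt_self M hM.nonneg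
  have hkey : ∀ a : Fin D → ℝ, (C *ᵥ a) ⬝ᵥ (C *ᵥ a) = a ⬝ᵥ (M *ᵥ a) := by
    intro a
    have hCt : Cᵀ = C := by
      rw [← conjTranspose_eq_transpose_of_trivial, hCh]
    rw [dotProduct_mulVec]
    have h1 : (C *ᵥ a) ᵥ* C = M *ᵥ a := by
      conv_lhs => rw [← hCt, Matrix.vecMul_transpose, Matrix.mulVec_mulVec, hCt, hCC]
    rw [h1, dotProduct_comm]
  have hnormC : ‖C‖ ≤ Real.sqrt c := by
    rw [Matrix.l2_opNorm_def]
    refine ContinuousLinearMap.opNorm_le_bound _ (Real.sqrt_nonneg c) fun x => ?_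
    obtain ⟨a, rfl⟩ := (WithLp.equiv 2 (Fin D → ℝ)).symm.surjective x
    rw [LinearEquiv.trans_apply, LinearMap.coe_toContinuousLinearMap']
    change ‖(WithLp.equiv 2 (Fin D → ℝ)).symm (C *ᵥ a)‖ ≤ Real.sqrt c * ‖(WithLp.equiv 2 (Fin D → ℝ)).symm a‖
    rw [aux_euclid_norm_sq, aux_euclid_norm_sq, hkey]
    calc Real.sqrt (a ⬝ᵥ (M *ᵥ a)) ≤ Real.sqrt (c * (a ⬝ᵥ a)) := Real.sqrt_le_sqrt (h a)
      _ = Real.sqrt c * Real.sqrt (a ⬝ᵥ a) := Real.sqrt_mul hc _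
  calc ‖M‖ = ‖Cᴴ * C‖ := by rw [hCh, hCC]
    _ = ‖C‖ * ‖C‖ := Matrix.l2_opNorm_conjTranspose_mul_self C
    _ ≤ Real.sqrt c * Real.sqrt c := by
        have h0 : (0:ℝ) ≤ ‖C‖ := norm_nonneg _
        exact mul_le_mul hnormC hnormC h0 (Real.sqrt_nonneg c)
    _ = c := Real.mul_self_sqrt hc

lemma aux_row_mul_col (v u : Fin D → ℝ) (N : Matrix (Fin D) (Fin D) ℝ) :
    (replicateRow Unit v * N * replicateCol Unit u) default default = v ⬝ᵥ (N *ᵥ u) := by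
  simp only [Matrix.mul_apply, Matrix.replicateRow_apply, Matrix.replicateCol_apply, mulVec, dotProduct,
    Finset.sum_mul, Finset.mul_sum]
  rw [Finset.sum_comm]
  exact Finset.sum_congr rfl fun j _ => Finset.sum_congr rfl fun k _ => by ring

lemma aux_kw (hD : 0 < D) (Z : Finset (Fin D → ℝ)) (hZne : Z.Nonempty)
    (hspan : Submodule.span ℝ (Z : Set (Fin D → ℝ)) = ⊤) :
    ∃ lam : (Fin D → ℝ) → ℝ, (∀ z ∈ Z, 0 ≤ lam z) ∧ (∑ z ∈ Z, lam z = 1) ∧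
      IsUnit (∑ z ∈ Z, lam z • vecMulVec z z) ∧
      ∀ z₀ ∈ Z, z₀ ⬝ᵥ ((∑ z ∈ Z, lam z • vecMulVec z z)⁻¹ *ᵥ z₀) ≤ (D : ℝ) := by
  classical
  have hKpos : (0:ℝ) < (Z.card : ℝ) := by exact_mod_cast Finset.card_pos.mpr hZne
  set A : ({z // z ∈ Z} → ℝ) → Matrix (Fin D) (Fin D) ℝ :=
    fun w => ∑ i : {z // z ∈ Z}, w i • vecMulVec i.1 i.1 with hAdef
  have hcont : Continuous fun w : {z // z ∈ Z} → ℝ => (A w).det :=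
    Continuous.matrix_det
      (continuous_finset_sum _ fun i _ => (continuous_apply i).smul continuous_const)
  have huni : (fun _ : {z // z ∈ Z} => (Z.card : ℝ)⁻¹) ∈ stdSimplex ℝ {z // z ∈ Z} := by
    constructor
    · intro x; positivity
    · rw [Finset.sum_const, Finset.card_univ, Fintype.card_coe, nsmul_eq_mul]
      field_simp
  obtain ⟨w₀, hw₀S, hmax⟩ := (isCompact_stdSimplex ℝ _).exists_isMaxOn ⟨_, huni⟩ hcont.continuousOn
  set M := A w₀ with hMdef
  have hWsum : ∑ i : {z // z ∈ Z}, vecMulVec i.1 i.1 = ∑ z ∈ Z, vecMulVec z z :=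
    Finset.sum_coe_sort Z (fun z => vecMulVec z z)
  have hWpd : (∑ z ∈ Z, vecMulVec z z).PosDef := aux_posDef Z hspan
  have hAu : A (fun _ => (Z.card : ℝ)⁻¹) = (Z.card : ℝ)⁻¹ • ∑ z ∈ Z, vecMulVec z z := by
    rw [hAdef, ← hWsum, Finset.smul_sum]
  have hdetu : 0 < (A (fun _ => (Z.card : ℝ)⁻¹)).det := by
    rw [hAu, det_smul]
    have := hWpd.det_pos
    have h2 : (0:ℝ) < ((Z.card : ℝ)⁻¹) ^ (Fintype.card (Fin D)) := by positivity
    positivity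
  have hdetM : 0 < M.det := lt_of_lt_of_le hdetu (hmax huni)
  have hunitdet : IsUnit M.det := hdetM.ne'.isUnit
  have hMpsd : M.PosSemidef := aux_posSemidef _ _ (fun i _ => hw₀S.1 i) _
  have key : ∀ i₀ : {z // z ∈ Z}, i₀.1 ⬝ᵥ (M⁻¹ *ᵥ i₀.1) ≤ (D:ℝ) := by
    intro i₀
    set z₀ := i₀.1 with hz₀
    set q := z₀ ⬝ᵥ (M⁻¹ *ᵥ z₀) with hq
    set wt : ℝ → ({z // z ∈ Z} → ℝ) :=
      fun t i => (1 - t) * w₀ i + t * (if i = i₀ then 1 else 0) with hwt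
    have hmem : ∀ t ∈ Set.Icc (0:ℝ) 1, wt t ∈ stdSimplex ℝ {z // z ∈ Z} := by
      intro t ht
      obtain ⟨h0, h1⟩ := ht
      constructor
      · intro i
        have hwi := hw₀S.1 i
        have hwi0 := hw₀S.1 i₀
        by_cases hii : i = i₀ <;>
          simp only [hwt, hii, if_pos, if_neg, ite_true, ite_false] <;> nlinarith
      · have hs := hw₀S.2
        simp only [hwt]
        rw [Finset.sum_add_distrib, ← Finset.mul_sum, ← Finset.mul_sum, hs,
          Finset.sum_ite_eq' Finset.univ i₀ (fun _ => (1:ℝ))]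
        simp
    have hAwt : ∀ t : ℝ, A (wt t) = (1 - t) • M + t • vecMulVec z₀ z₀ := by
      intro t
      rw [hMdef, hAdef]
      simp only [hwt, add_smul, Finset.sum_add_distrib,
        mul_ite, mul_one, mul_zero, ite_smul, zero_smul, Finset.sum_ite_eq',
        Finset.mem_univ, if_true]
      congr 1
      rw [Finset.smul_sum]
      exact Finset.sum_congr rfl fun i _ => mul_smul _ _ _
    set g : ℝ → ℝ := fun t => M.det * ((1 - t)^D + q * (t * (1 - t)^(D-1))) with hg
    have hval : ∀ t ∈ Set.Ioo (0:ℝ) 1, (A (wt t)).det = g t := by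
      intro t ht
      have hs0 : (0:ℝ) < 1 - t := by linarith [ht.2]
      have hsne : (1:ℝ) - t ≠ 0 := hs0.ne'
      have hdetsM : ((1 - t) • M).det = (1-t)^D * M.det := by
        rw [det_smul, Fintype.card_fin]
      have hu : IsUnit ((1 - t) • M).det := by
        rw [hdetsM]
        exact (by positivity : (0:ℝ) < (1-t)^D * M.det).ne'.isUnit
      haveI : Invertible (1 - t) := invertibleOfNonzero hsne
      rw [hAwt t]
      have hsmulvmv : t • vecMulVec z₀ z₀ = vecMulVec (t • z₀) z₀ := by
        ext i j
        simp only [Matrix.smul_apply, vecMulVec_apply, Pi.smul_apply, smul_eq_mul]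
        ring
      rw [hsmulvmv, vecMulVec_eq Unit, Matrix.det_add_replicateCol_mul_replicateRow hu,
        Matrix.det_unique (1 + replicateRow Unit z₀ * ((1 - t) • M)⁻¹ * replicateCol Unit (t • z₀)),
        Matrix.add_apply, Matrix.one_apply_eq, aux_row_mul_col,
        Matrix.inv_smul (A := M) (k := 1 - t) hunitdet, smul_mulVec, mulVec_smul,
        dotProduct_smul, dotProduct_smul, invOf_eq_inv, hdetsM, hg]
      simp only [smul_eq_mul, hq]
      obtain ⟨e, he⟩ : ∃ e, D = e + 1 := ⟨D - 1, (Nat.succ_pred_eq_of_pos hD).symm⟩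
      subst he
      simp only [Nat.add_sub_cancel]
      field_simp
      ring
    have hder : HasDerivAt g (M.det * (q - D)) 0 := by
      have h1 : HasDerivAt (fun t : ℝ => 1 - t) (-1) 0 := by
        simpa using (hasDerivAt_id (0:ℝ)).const_sub (1:ℝ)
      have h2 := h1.pow D
      have h3 := h1.pow (D - 1)
      have h4 := (hasDerivAt_id (0:ℝ)).mul h3
      have h5 := (h2.add (h4.const_mul q)).const_mul M.det
      convert h5 using 1
      · rfl
      · rfl
      · funext t
        rw [hg]
        simp only [Pi.add_apply, Pi.pow_apply, Pi.mul_apply, id_eq]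
      · simp only [sub_zero, one_pow, mul_one, mul_neg, one_mul, id_eq, zero_mul, add_zero,
          Pi.pow_apply]
        ring
    have hg0 : g 0 = M.det := by simp [hg]
    have hle : ∀ t ∈ Set.Ioo (0:ℝ) 1, g t ≤ g 0 := by
      intro t ht
      rw [← hval t ht, hg0]
      exact hmax (hmem t ⟨le_of_lt ht.1, le_of_lt ht.2⟩)
    have hslope := hder.tendsto_slope_zero_right
    have hev : ∀ᶠ t in nhdsWithin (0:ℝ) (Set.Ioi 0), t⁻¹ • (g (0 + t) - g 0) ≤ 0 := by
      filter_upwards [Ioo_mem_nhdsGT_of_mem (Set.mem_Ico.mpr ⟨le_refl (0:ℝ), zero_lt_one⟩)]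
        with t ht
      rw [zero_add]
      have ht0 : 0 < t := ht.1
      have hneg : g t - g 0 ≤ 0 := by linarith [hle t ht]
      have := mul_nonpos_of_nonneg_of_nonpos (le_of_lt (inv_pos.mpr ht0)) hneg
      simpa [smul_eq_mul] using this
    have hd0 : M.det * (q - D) ≤ 0 := le_of_tendsto hslope hev
    nlinarith
  set lam : (Fin D → ℝ) → ℝ := fun z => if h : z ∈ Z then w₀ ⟨z, h⟩ else 0 with hlamdef
  have hsum : ∑ z ∈ Z, lam z = 1 := by
    rw [← Finset.sum_coe_sort Z lam]
    rw [Finset.sum_congr rfl (fun i (_ : i ∈ Finset.univ) => dif_pos i.2)]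
    exact hw₀S.2
  have hmat : ∑ z ∈ Z, lam z • vecMulVec z z = M := by
    rw [hMdef, hAdef, ← Finset.sum_coe_sort Z (fun z => lam z • vecMulVec z z)]
    exact Finset.sum_congr rfl fun i _ => by rw [hlamdef]; simp [dif_pos i.2]
  refine ⟨lam, ?_, hsum, ?_, ?_⟩
  · intro z hz
    rw [hlamdef]
    simp only [dif_pos hz]
    exact hw₀S.1 _
  · rw [hmat]
    exact (Matrix.isUnit_iff_isUnit_det M).mpr hunitdet
  · intro z₀ hz₀
    rw [hmat]
    exact key ⟨z₀, hz₀⟩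

end Aux

/-- Bound on the norm of the inverse covariance of the G-optimal design: if the finite
set `Z ⊆ ℝ^D` of `K` vectors spans `ℝ^D` and `λ⋆` minimizes the G-optimal design
objective over the simplex on `Z`, then `‖Σ(λ⋆)⁻¹‖ ≤ D / ν_min` in the `L²` operator
norm, where `ν_min` is the smallest eigenvalue of `(1/K) Σ_{z∈Z} z zᵀ`. -/
theorem inverse_covariance_norm_bound {D : ℕ}
    (Z : Finset (Fin D → ℝ)) (hZne : Z.Nonempty)
    (hspan : Submodule.span ℝ (Z : Set (Fin D → ℝ)) = ⊤)
    (K : ℕ) (hK : K = Z.card)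
    (lamstar : (Fin D → ℝ) → ℝ)
    (hlam : (∀ z ∈ Z, 0 ≤ lamstar z) ∧ ∑ z ∈ Z, lamstar z = 1)
    (hmin : ∀ lam : (Fin D → ℝ) → ℝ,
      (∀ z ∈ Z, 0 ≤ lam z) → ∑ z ∈ Z, lam z = 1 →
        gObj Z hZne lamstar ≤ gObj Z hZne lam)
    (nu : ℝ)
    (hnu : IsLeast (spectrum ℝ (((K : ℝ)⁻¹ • ∑ z ∈ Z, vecMulVec z z :
      Matrix (Fin D) (Fin D) ℝ))) nu) :
    ‖(∑ z ∈ Z, lamstar z • vecMulVec z z)⁻¹‖ ≤ (D : ℝ) / nu := by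
  classical
  rcases Nat.eq_zero_or_pos D with hD0 | hD
  · subst hD0
    have h0 : (∑ z ∈ Z, lamstar z • vecMulVec z z)⁻¹ = 0 := by
      ext i j
      exact i.elim0
    rw [h0, norm_zero]
    simp
  have hKpos : 0 < K := by rw [hK]; exact Finset.card_pos.mpr hZne
  have hKR : (0:ℝ) < (K:ℝ) := by exact_mod_cast hKpos
  set W : Matrix (Fin D) (Fin D) ℝ := ∑ z ∈ Z, vecMulVec z z with hWdef
  have hWpd : W.PosDef := aux_posDef Z hspan
  set V : Matrix (Fin D) (Fin D) ℝ := (K:ℝ)⁻¹ • W with hVdef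
  have hVpd : V.PosDef := by
    refine .of_dotProduct_mulVec_pos ?_ fun x hx => ?_
    · unfold Matrix.IsHermitian
      rw [hVdef, conjTranspose_smul, hWpd.1]
      simp
    · rw [hVdef, smul_mulVec, dotProduct_smul, smul_eq_mul]
      exact mul_pos (inv_pos.mpr hKR) (hWpd.dotProduct_mulVec_pos hx)
  have hnupos : 0 < nu := by
    by_contra hle
    push_neg at hle
    have hmemnu := hnu.1
    rw [spectrum.mem_iff] at hmemnu
    apply hmemnu
    have hpsd1 : ((-nu) • (1 : Matrix (Fin D) (Fin D) ℝ)).PosSemidef := by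
      refine .of_dotProduct_mulVec_nonneg ?_ fun x => ?_
      · unfold Matrix.IsHermitian
        rw [conjTranspose_smul, conjTranspose_one]
        simp
      · rw [smul_mulVec, one_mulVec, dotProduct_smul, smul_eq_mul]
        refine mul_nonneg (by linarith) ?_
        rw [show star x = x from funext fun _ => rfl]
        exact Finset.sum_nonneg fun i _ => mul_self_nonneg _
    have hpd : (V - algebraMap ℝ (Matrix (Fin D) (Fin D) ℝ) nu).PosDef := by
      rw [Algebra.algebraMap_eq_smul_one, sub_eq_add_neg, ← neg_smul]
      exact hVpd.add_posSemidef hpsd1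
    have hu2 : IsUnit (V - algebraMap ℝ (Matrix (Fin D) (Fin D) ℝ) nu) := hpd.isUnit
    rw [show (algebraMap ℝ (Matrix (Fin D) (Fin D) ℝ)) nu - V
        = -(V - algebraMap ℝ (Matrix (Fin D) (Fin D) ℝ) nu) from (neg_sub _ _).symm]
    exact hu2.neg
  have hrayW : ∀ x : Fin D → ℝ, (K:ℝ) * nu * (x ⬝ᵥ x) ≤ x ⬝ᵥ (W *ᵥ x) := by
    intro x
    have h1 := aux_rayleigh hVpd.1 (fun mu hmu => hnu.2 hmu) x
    rw [hVdef, smul_mulVec, dotProduct_smul, smul_eq_mul] at h1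
    have h2 := mul_le_mul_of_nonneg_left h1 hKR.le
    calc (K:ℝ) * nu * (x ⬝ᵥ x) = (K:ℝ) * (nu * (x ⬝ᵥ x)) := by ring
      _ ≤ (K:ℝ) * ((K:ℝ)⁻¹ * (x ⬝ᵥ (W *ᵥ x))) := h2
      _ = x ⬝ᵥ (W *ᵥ x) := by
          rw [← mul_assoc, mul_inv_cancel₀ hKR.ne', one_mul]
  obtain ⟨lamd, hlamd1, hlamd2, hlamd3, hlamd4⟩ := aux_kw hD Z hZne hspan
  have hchain : gObj Z hZne lamstar ≤ ((D:ℝ) : EReal) := by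
    refine le_trans (hmin lamd hlamd1 hlamd2) ?_
    simp only [gObj]
    rw [if_pos hlamd3]
    exact EReal.coe_le_coe_iff.mpr (Finset.sup'_le _ _ fun z hz => hlamd4 z hz)
  set Mst : Matrix (Fin D) (Fin D) ℝ := ∑ z ∈ Z, lamstar z • vecMulVec z z with hMstdef
  have hMstpsd : Mst.PosSemidef := aux_posSemidef Z lamstar hlam.1 (fun v => v)
  have hunit : IsUnit Mst := by
    by_contra hnu2
    simp only [gObj] at hchain
    rw [if_neg hnu2] at hchain
    exact absurd hchain (not_le.mpr (EReal.coe_lt_top _))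
  have hub : ∀ z ∈ Z, z ⬝ᵥ (Mst⁻¹ *ᵥ z) ≤ (D:ℝ) := by
    intro z hz
    simp only [gObj] at hchain
    rw [if_pos hunit] at hchain
    exact le_trans (Finset.le_sup'
      (fun z' => z' ⬝ᵥ Mst⁻¹.mulVec z') hz) (EReal.coe_le_coe_iff.mp hchain)
  have hMinv : Mst⁻¹.PosSemidef := hMstpsd.inv
  have hWdetu : IsUnit W.det := hWpd.det_pos.ne'.isUnit
  have hDnn : (0:ℝ) ≤ (D:ℝ) := Nat.cast_nonneg D
  have hfin : ∀ u : Fin D → ℝ, u ⬝ᵥ (Mst⁻¹ *ᵥ u) ≤ ((D:ℝ)/nu) * (u ⬝ᵥ u) := by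
    intro u
    set C := CFC.sqrt Mst⁻¹ with hCdef
    have hCz : ∀ z ∈ Z, (C *ᵥ z) ⬝ᵥ (C *ᵥ z) ≤ (D:ℝ) := by
      intro z hz
      rw [hCdef, aux_sqrt_dot hMinv, dotProduct_comm]
      exact hub z hz
    have hCnn : ∀ z : Fin D → ℝ, 0 ≤ (C *ᵥ z) ⬝ᵥ (C *ᵥ z) :=
      fun z => Finset.sum_nonneg fun i _ => mul_self_nonneg _
    have habs : ∀ z ∈ Z, ∀ z' ∈ Z, |(C *ᵥ z) ⬝ᵥ (C *ᵥ z')| ≤ (D:ℝ) := by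
      intro z hz z' hz'
      have hcs : ((C *ᵥ z) ⬝ᵥ (C *ᵥ z')) ^ 2
          ≤ ((C *ᵥ z) ⬝ᵥ (C *ᵥ z)) * ((C *ᵥ z') ⬝ᵥ (C *ᵥ z')) := by
        have := Finset.sum_mul_sq_le_sq_mul_sq Finset.univ (C *ᵥ z) (C *ᵥ z')
        simpa [dotProduct, sq] using this
      have hsq : ((C *ᵥ z) ⬝ᵥ (C *ᵥ z')) ^ 2 ≤ (D:ℝ) ^ 2 := by
        calc ((C *ᵥ z) ⬝ᵥ (C *ᵥ z')) ^ 2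
            ≤ ((C *ᵥ z) ⬝ᵥ (C *ᵥ z)) * ((C *ᵥ z') ⬝ᵥ (C *ᵥ z')) := hcs
          _ ≤ (D:ℝ) * (D:ℝ) := mul_le_mul (hCz z hz) (hCz z' hz') (hCnn z') hDnn
          _ = (D:ℝ) ^ 2 := (sq (D:ℝ)).symm
      calc |(C *ᵥ z) ⬝ᵥ (C *ᵥ z')| = Real.sqrt (((C *ᵥ z) ⬝ᵥ (C *ᵥ z')) ^ 2) :=
            (Real.sqrt_sq_eq_abs _).symm
        _ ≤ Real.sqrt ((D:ℝ) ^ 2) := Real.sqrt_le_sqrt hsq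
        _ = (D:ℝ) := Real.sqrt_sq hDnn
    set wv : Fin D → ℝ := W⁻¹ *ᵥ u with hwvdef
    have hWu : W *ᵥ wv = u := by
      rw [hwvdef, Matrix.mulVec_mulVec, Matrix.mul_nonsing_inv _ hWdetu, one_mulVec]
    have hdecomp : ∑ z ∈ Z, (z ⬝ᵥ wv) • z = u := by
      have h1 : ∑ z ∈ Z, (z ⬝ᵥ wv) • z = ∑ z ∈ Z, vecMulVec z z *ᵥ wv :=
        Finset.sum_congr rfl fun z _ => (aux_vecMulVec_mulVec z wv).symm
      rw [h1, ← aux_sum_mulVec, ← hWdef, hWu]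
    have hCu : C *ᵥ u = ∑ z ∈ Z, (z ⬝ᵥ wv) • (C *ᵥ z) := by
      conv_lhs => rw [← hdecomp]
      have h2 := map_sum (Matrix.mulVecLin C) (fun z => (z ⬝ᵥ wv) • z) Z
      simp only [Matrix.mulVecLin_apply] at h2
      rw [h2]
      exact Finset.sum_congr rfl fun z _ => Matrix.mulVec_smul C _ _
    have hE : (C *ᵥ u) ⬝ᵥ (C *ᵥ u)
        = ∑ z ∈ Z, ∑ z' ∈ Z, (z ⬝ᵥ wv) * (z' ⬝ᵥ wv) * ((C *ᵥ z) ⬝ᵥ (C *ᵥ z')) := by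
      rw [hCu, aux_sum_dotProduct]
      refine Finset.sum_congr rfl fun z _ => ?_
      rw [smul_dotProduct, aux_dotProduct_sum, Finset.smul_sum]
      refine Finset.sum_congr rfl fun z' _ => ?_
      rw [dotProduct_smul]
      simp only [smul_eq_mul]
      ring
    have hEle : (C *ᵥ u) ⬝ᵥ (C *ᵥ u) ≤ (D:ℝ) * (∑ z ∈ Z, |z ⬝ᵥ wv|) ^ 2 := by
      rw [hE]
      have hbd : ∀ z ∈ Z, ∑ z' ∈ Z, (z ⬝ᵥ wv) * (z' ⬝ᵥ wv) * ((C *ᵥ z) ⬝ᵥ (C *ᵥ z'))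
          ≤ ∑ z' ∈ Z, |z ⬝ᵥ wv| * |z' ⬝ᵥ wv| * (D:ℝ) := by
        intro z hz
        refine Finset.sum_le_sum fun z' hz' => ?_
        calc (z ⬝ᵥ wv) * (z' ⬝ᵥ wv) * ((C *ᵥ z) ⬝ᵥ (C *ᵥ z'))
            ≤ |(z ⬝ᵥ wv) * (z' ⬝ᵥ wv) * ((C *ᵥ z) ⬝ᵥ (C *ᵥ z'))| := le_abs_self _
          _ = |z ⬝ᵥ wv| * |z' ⬝ᵥ wv| * |(C *ᵥ z) ⬝ᵥ (C *ᵥ z')| := by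
              rw [abs_mul, abs_mul]
          _ ≤ |z ⬝ᵥ wv| * |z' ⬝ᵥ wv| * (D:ℝ) := by
              refine mul_le_mul_of_nonneg_left (habs z hz z' hz') ?_
              positivity
      calc ∑ z ∈ Z, ∑ z' ∈ Z, (z ⬝ᵥ wv) * (z' ⬝ᵥ wv) * ((C *ᵥ z) ⬝ᵥ (C *ᵥ z'))
          ≤ ∑ z ∈ Z, ∑ z' ∈ Z, |z ⬝ᵥ wv| * |z' ⬝ᵥ wv| * (D:ℝ) :=
            Finset.sum_le_sum hbd
        _ = (D:ℝ) * (∑ z ∈ Z, |z ⬝ᵥ wv|) ^ 2 := by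
            rw [sq, Finset.sum_mul_sum]
            rw [Finset.mul_sum]
            refine Finset.sum_congr rfl fun z _ => ?_
            rw [Finset.mul_sum]
            refine Finset.sum_congr rfl fun z' _ => ?_
            ring
    have hsum2 : (∑ z ∈ Z, |z ⬝ᵥ wv|) ^ 2 ≤ (K:ℝ) * ∑ z ∈ Z, (z ⬝ᵥ wv) ^ 2 := by
      have h1 := sq_sum_le_card_mul_sum_sq (s := Z) (f := fun z => |z ⬝ᵥ wv|)
      have h2 : ∑ z ∈ Z, |z ⬝ᵥ wv| ^ 2 = ∑ z ∈ Z, (z ⬝ᵥ wv) ^ 2 :=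
        Finset.sum_congr rfl fun z _ => sq_abs _
      rw [h2] at h1
      calc (∑ z ∈ Z, |z ⬝ᵥ wv|) ^ 2 ≤ (Z.card : ℝ) * ∑ z ∈ Z, (z ⬝ᵥ wv) ^ 2 := h1
        _ = (K:ℝ) * ∑ z ∈ Z, (z ⬝ᵥ wv) ^ 2 := by rw [hK]
    have hqsum : ∑ z ∈ Z, (z ⬝ᵥ wv) ^ 2 = wv ⬝ᵥ u := by
      have h1 := aux_quadForm Z (fun _ => (1:ℝ)) (fun v => v) wv
      simp only [one_smul, one_mul] at h1
      rw [← hWdef] at h1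
      rw [← h1, hWu]
    have hwv0 : (0:ℝ) ≤ wv ⬝ᵥ wv := Finset.sum_nonneg fun i _ => mul_self_nonneg _
    have hu0 : (0:ℝ) ≤ u ⬝ᵥ u := Finset.sum_nonneg fun i _ => mul_self_nonneg _
    have hwvu : wv ⬝ᵥ u ≤ (u ⬝ᵥ u) / ((K:ℝ) * nu) := by
      have hbb : (K:ℝ) * nu * (wv ⬝ᵥ wv) ≤ wv ⬝ᵥ u := by
        have := hrayW wv
        rwa [hWu] at this
      have hcs : (wv ⬝ᵥ u) ^ 2 ≤ (wv ⬝ᵥ wv) * (u ⬝ᵥ u) := by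
        have := Finset.sum_mul_sq_le_sq_mul_sq Finset.univ wv u
        simpa [dotProduct, sq] using this
      rcases eq_or_lt_of_le hwv0 with ha | ha
      · have hwvz : wv = (0 : Fin D → ℝ) := dotProduct_self_eq_zero.mp ha.symm
        rw [hwvz, zero_dotProduct]
        positivity
      · rw [le_div_iff₀ (mul_pos hKR hnupos)]
        have hbb0 : (0:ℝ) ≤ wv ⬝ᵥ u := le_trans (by positivity) hbb
        nlinarith [mul_le_mul_of_nonneg_left hbb hbb0, hcs, ha]
    have hEq : u ⬝ᵥ (Mst⁻¹ *ᵥ u) = (C *ᵥ u) ⬝ᵥ (C *ᵥ u) := by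
      rw [hCdef, aux_sqrt_dot hMinv, dotProduct_comm]
    calc u ⬝ᵥ (Mst⁻¹ *ᵥ u) = (C *ᵥ u) ⬝ᵥ (C *ᵥ u) := hEq
      _ ≤ (D:ℝ) * (∑ z ∈ Z, |z ⬝ᵥ wv|) ^ 2 := hEle
      _ ≤ (D:ℝ) * ((K:ℝ) * (wv ⬝ᵥ u)) := by
          refine mul_le_mul_of_nonneg_left ?_ hDnn
          rw [← hqsum]
          exact hsum2
      _ ≤ (D:ℝ) * ((K:ℝ) * ((u ⬝ᵥ u) / ((K:ℝ) * nu))) := by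
          refine mul_le_mul_of_nonneg_left (mul_le_mul_of_nonneg_left hwvu hKR.le) hDnn
      _ = ((D:ℝ)/nu) * (u ⬝ᵥ u) := by
          field_simp
  exact aux_norm_le hMinv (div_nonneg hDnn hnupos.le) hfin
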